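/- Let ι be a finite type with n = |ι| ≥ 1, let T ≥ 1 be an integer, and let H > 0 be real. Let K ⊆ ℝ^ι be a convex set such that every p ∈ K satisfies p(i) ≥ 0 for all i ∈ ι and Σ_{i∈ι} p(i) ≤ H. Suppose that for each i ∈ ι there exists z_i ∈ K with z_i(i) > 0 and p(i) ≤ z_i(i) for all p ∈ K. For t = 1,…,T+1 let η_t : ι → (0, ∞) satisfy η_{t+1}(i) ≤ η_t(i) for all t ≤ T and i, with η_1(i) = η₁ constant in i; for t = 1,…,T let ℓ_t ∈ ℝ^ι, and for t = 1,…,T+1 let m_t ∈ ℝ^ι. For t = 1,…,T+1 let p_t ∈ K with p_t(i) > 0 for all i be a minimizer over K of p ↦ ⟨p, Σ_{τ=1}^{t−1} ℓ_τ + m_t⟩ + Σ_{i∈ι} (1/η_t(i)) · ln(1/p(i)). Assume that η_t(i)·p_t(i)·(ℓ_t(i) − m_t(i)) ≥ −1/2 for all t ≤ T and all i. Then for every u ∈ K: Σ_{t=1}^{T} ⟨p_t − u, ℓ_t⟩ ≤ n·ln(nT)/η₁ + Σ_{t=1}^{T} Σ_{i∈ι} (1/η_{t+1}(i) − 1/η_t(i))·ln(nT)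 + Σ_{t=1}^{T} Σ_{i∈ι} η_t(i)·p_t(i)²·(ℓ_t(i) − m_t(i))² + (1/T)·Σ_{t=1}^{T} ⟨−u + (1/n)·Σ_{i∈ι} z_i, ℓ_t⟩ + 2H·max_{i∈ι} |m_{T+1}(i)|. -/

import Mathlib

open Real Filter

private lemma aux_log_quad {x : ℝ} (hx : -(1/2) ≤ x) : x - Real.log (1+x) ≤ x^2 := by
  have h1x : (0:ℝ) < 1 + x := by linarith
  set f : ℝ → ℝ := fun y => Real.log (1+y) - y + y^2 with hf
  have hder : ∀ y : ℝ, -1 < y → HasDerivAt f (1/(1+y) - 1 + 2*y) y := by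
    intro y hy
    have h1 : HasDerivAt (fun y : ℝ => 1 + y) 1 y := by
      simpa using (hasDerivAt_id y).const_add 1
    have h2 : HasDerivAt (fun y : ℝ => Real.log (1+y)) (1/(1+y)) y := by
      simpa [one_div] using h1.log (by linarith)
    have h3 : HasDerivAt (fun y : ℝ => y^2) (2*y) y := by
      simpa [mul_comm] using hasDerivAt_pow 2 y
    exact (h2.sub (hasDerivAt_id y)).add h3
  have hf0 : f 0 = 0 := by simp [hf]
  have key : 0 ≤ f x := by
    rcases le_or_gt 0 x with h | h
    · have hmono : MonotoneOn f (Set.Ici (0:ℝ)) := by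
        apply monotoneOn_of_deriv_nonneg (convex_Ici 0)
        · intro y hy
          exact ((hder y (by simp at hy; linarith)).continuousAt).continuousWithinAt
        · intro y hy
          rw [interior_Ici] at hy
          exact ((hder y (by simp at hy ⊢; linarith)).differentiableAt).differentiableWithinAt
        · intro y hy
          rw [interior_Ici] at hy
          simp only [Set.mem_Ioi] at hy
          rw [(hder y (by linarith)).deriv]
          have h4 : (1:ℝ) - y ≤ 1/(1+y) := by
            rw [le_div_iff₀ (by linarith)]; nlinarith
          linarith
      have := hmono (Set.self_mem_Ici) (Set.mem_Ici.2 h) h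
      linarith [hf0 ▸ this]
    · have hanti : AntitoneOn f (Set.Icc (-(1/2):ℝ) 0) := by
        apply antitoneOn_of_deriv_nonpos (convex_Icc _ _)
        · intro y hy
          simp only [Set.mem_Icc] at hy
          exact ((hder y (by linarith)).continuousAt).continuousWithinAt
        · intro y hy
          rw [interior_Icc] at hy
          simp only [Set.mem_Ioo] at hy
          exact ((hder y (by linarith)).differentiableAt).differentiableWithinAt
        · intro y hy
          rw [interior_Icc] at hy
          simp only [Set.mem_Ioo] at hy
          rw [(hder y (by linarith)).deriv]
          have h4 : 1/(1+y) ≤ (1:ℝ) - 2*y := by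
            rw [div_le_iff₀ (by linarith)]; nlinarith
          linarith
      have := hanti (Set.mem_Icc.2 ⟨hx, le_of_lt h⟩)
        (Set.mem_Icc.2 ⟨by norm_num, le_refl 0⟩) (le_of_lt h)
      linarith [hf0 ▸ this]
  simp only [hf] at key
  linarith

private lemma aux_stab {a b e g : ℝ} (ha : 0 < a) (hb : 0 < b) (he : 0 < e)
    (hc : -(1/2) ≤ e * a * g) :
    (a - b) * g - (1/e) * (b/a - 1 - (Real.log b - Real.log a)) ≤ e * a^2 * g^2 := by
  set x := e * a * g with hx
  have h1x : (0:ℝ) < 1 + x := by linarith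
  set r := b / a with hr
  have hrpos : 0 < r := div_pos hb ha
  have hlog : Real.log r ≤ r * (1+x) - 1 - Real.log (1+x) := by
    have h := Real.log_le_sub_one_of_pos (show 0 < r * (1+x) by positivity)
    rw [Real.log_mul (ne_of_gt hrpos) (ne_of_gt h1x)] at h
    linarith
  have hquad : x - Real.log (1+x) ≤ x^2 := aux_log_quad hc
  have hlogb : Real.log b - Real.log a = Real.log r :=
    (Real.log_div (ne_of_gt hb) (ne_of_gt ha)).symm
  rw [hlogb]
  have hag : (a - b) * g = (1/e) * (x * (1 - r)) := by
    field_simp [hx, hr]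
    rw [hx, hr]; field_simp
  rw [hag]
  have key : x * (1 - r) - (r - 1 - Real.log r) ≤ x^2 := by
    calc x * (1-r) - (r - 1 - Real.log r) ≤ x - Real.log (1+x) := by nlinarith [hlog]
      _ ≤ x^2 := hquad
  have he' : (0:ℝ) < 1/e := by positivity
  calc (1/e) * (x*(1-r)) - (1/e) * (r - 1 - Real.log r)
      = (1/e) * (x*(1-r) - (r-1-Real.log r)) := by ring
    _ ≤ (1/e) * x^2 := mul_le_mul_of_nonneg_left key (le_of_lt he')
    _ = e * a^2 * g^2 := by field_simp [hx]; ring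

private lemma aux_foc {ι : Type*} [Fintype ι] {K : Set (ι → ℝ)} (hK : Convex ℝ K)
    (c e : ι → ℝ) {p0 : ι → ℝ} (hp0 : p0 ∈ K) (hp0pos : ∀ i, 0 < p0 i)
    (hmin : ∀ q ∈ K, (∀ i, 0 < q i) →
      (∑ i, p0 i * c i) + ∑ i, (1/e i) * Real.log (1/p0 i) ≤
      (∑ i, q i * c i) + ∑ i, (1/e i) * Real.log (1/q i))
    {q : ι → ℝ} (hq : q ∈ K) (hqpos : ∀ i, 0 < q i) :
    ∑ i, (1/e i) * ((q i - p0 i)/p0 i) ≤ ∑ i, c i * (q i - p0 i) := by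
  classical
  set v : ι → ℝ := fun i => q i - p0 i with hv
  set φ : ℝ → ℝ := fun s =>
    (∑ i, (p0 i + s * v i) * c i) + ∑ i, (1/e i) * (-Real.log (p0 i + s * v i)) with hφ
  set d : ℝ := (∑ i, v i * c i) + ∑ i, (1/e i) * (-(v i / p0 i)) with hd
  have hder : HasDerivAt φ d 0 := by
    apply HasDerivAt.add
    · apply HasDerivAt.fun_sum
      intro i _
      have : HasDerivAt (fun s : ℝ => p0 i + s * v i) (v i) 0 := by
        simpa using ((hasDerivAt_id (0:ℝ)).mul_const (v i)).const_add (p0 i)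
      simpa using this.mul_const (c i)
    · apply HasDerivAt.fun_sum
      intro i _
      have h1 : HasDerivAt (fun s : ℝ => p0 i + s * v i) (v i) 0 := by
        simpa using ((hasDerivAt_id (0:ℝ)).mul_const (v i)).const_add (p0 i)
      have h2 : HasDerivAt (fun s : ℝ => Real.log (p0 i + s * v i)) (v i / p0 i) 0 := by
        simpa using h1.log (by simp; exact ne_of_gt (hp0pos i))
      simpa using (h2.neg).const_mul (1/e i)
  have hmem : ∀ s ∈ Set.Ioc (0:ℝ) 1, φ 0 ≤ φ s := by
    intro s hs
    obtain ⟨hs0, hs1⟩ := hs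
    set ps : ι → ℝ := fun i => p0 i + s * v i with hps
    have hpsK : ps ∈ K := by
      have := hK hp0 hq (by linarith : (0:ℝ) ≤ 1 - s) (le_of_lt hs0) (by ring)
      convert this using 1
      funext i
      simp [hps, hv]
      ring
    have hpspos : ∀ i, 0 < ps i := by
      intro i
      have : ps i = (1-s) * p0 i + s * q i := by simp [hps, hv]; ring
      rw [this]
      have h1 := mul_nonneg (by linarith : (0:ℝ) ≤ 1-s) (hp0pos i).le
      have h2 := mul_pos hs0 (hqpos i)
      linarith
    have := hmin ps hpsK hpspos
    simp only [one_div, Real.log_inv] at this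
    simp only [hφ, one_div, Real.log_inv]
    convert this using 2 <;> simp [hps]
  have hd0 : 0 ≤ d := by
    have htend : Tendsto (slope φ 0) (nhdsWithin 0 (Set.Ioi 0)) (nhds d) :=
      (hasDerivAt_iff_tendsto_slope.1 hder).mono_left
        (nhdsWithin_mono 0 (fun x hx => ne_of_gt hx))
    apply ge_of_tendsto htend
    filter_upwards [Ioc_mem_nhdsGT_of_mem ⟨le_refl 0, zero_lt_one⟩] with s hs
    have h1 := hmem s hs
    have h0 : 0 < s := hs.1
    rw [slope_def_field]
    apply div_nonneg (by linarith) (by linarith)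
  have e1 : ∑ i, (1/e i) * (-(v i / p0 i)) = -∑ i, (1/e i) * (v i / p0 i) := by
    simp [mul_neg]
  have e2 : ∑ i, v i * c i = ∑ i, c i * (q i - p0 i) := by
    apply Finset.sum_congr rfl; intro i _; rw [hv]; ring
  rw [hd, e1, e2] at hd0
  have e3 : ∑ i, (1/e i) * ((q i - p0 i)/p0 i) = ∑ i, (1/e i) * (v i / p0 i) := rfl
  rw [e3]
  linarith

private lemma aux_telescope (f : ℕ → ℝ) (T : ℕ) :
    ∑ t ∈ Finset.Icc 1 T, (f (t+1) - f t) = f (T+1) - f 1 := by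
  induction T with
  | zero => simp
  | succ n ih =>
    rw [Finset.sum_Icc_succ_top (Nat.succ_le_succ (Nat.zero_le n)), ih]
    ring

private lemma aux_sum_shift (f : ℕ → ℝ) {t : ℕ} (ht : 1 ≤ t) :
    ∑ τ ∈ Finset.Icc 1 (t+1-1), f τ = (∑ τ ∈ Finset.Icc 1 (t-1), f τ) + f t := by
  obtain ⟨a, rfl⟩ : ∃ a, t = a + 1 := ⟨t - 1, by omega⟩
  simp only [Nat.add_sub_cancel]
  exact Finset.sum_Icc_succ_top (Nat.succ_le_succ (Nat.zero_le a)) f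

private lemma aux_step_comb {Φt Φt1 A B C D S1' S2' S1c S2c P1 P2 F G : ℝ}
    (e1 : Φt1 = S1' + S2') (e2 : Φt = P1 + P2) (i1 : S1' = S1c + A + B)
    (i2 : S2' = S2c + C) (i3 : D ≤ F + G) (i4 : F = S1c - P1) (i5 : G = S2c - P2) :
    Φt + A + B + C + D ≤ Φt1 := by linarith

private lemma aux_comb {X1 Q X2 P1M PTM SA SB SC SD PhiT Phi1 VL VM PSIv PSI1 HM2 XC LP1 R1 R2 : ℝ}
    (h1 : X1 ≤ Q) (h2 : X2 = P1M - PTM) (h3 : SA + SB + SC + SD ≤ PhiT - Phi1)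
    (h4 : PhiT ≤ VL + VM + PSIv) (h5 : Phi1 = P1M + PSI1) (h6 : VM - PTM ≤ HM2)
    (h7 : SC = -XC) (h8 : LP1 = -PSI1) (h9 : LP1 + PSIv + XC ≤ R1 + R2) :
    X1 + SD + X2 + SB + SA - VL ≤ R1 + R2 + Q + HM2 := by linarith

private lemma aux_comb2 {S Y R1 R2 Q HM2 : ℝ} (h : S ≤ R1 + R2 + Q + HM2) :
    S + Y ≤ R1 + R2 + Q + Y + HM2 := by linarith

/-- Regret bound for optimistic FTRL with the log-barrier regularizer
`p ↦ ∑ i, (1/η t i) · ln(1/p i)` over a convex set `K ⊆ ℝ^ι` of nonnegative vectors with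
`∑ i, p i ≤ H` (the occupancy-measure polytope), where `z i ∈ K` maximizes the `i`-th
coordinate over `K`. -/
theorem oftrl_log_barrier_global
    {ι : Type*} [Fintype ι] [Nonempty ι] (hn : 1 ≤ Fintype.card ι)
    (T : ℕ) (hT : 1 ≤ T) (H : ℝ) (hH : 0 < H)
    (K : Set (ι → ℝ)) (hK : Convex ℝ K)
    (hKnonneg : ∀ p ∈ K, ∀ i, 0 ≤ p i)
    (hKsum : ∀ p ∈ K, ∑ i, p i ≤ H)
    (z : ι → (ι → ℝ)) (hzK : ∀ i, z i ∈ K) (hzpos : ∀ i, 0 < z i i)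
    (hzmax : ∀ i, ∀ p ∈ K, p i ≤ z i i)
    (η : ℕ → ι → ℝ)
    (hηpos : ∀ t ∈ Finset.Icc 1 (T + 1), ∀ i, 0 < η t i)
    (hηdec : ∀ t ∈ Finset.Icc 1 T, ∀ i, η (t + 1) i ≤ η t i)
    (η₁ : ℝ) (hη1 : ∀ i, η 1 i = η₁)
    (ℓ : ℕ → ι → ℝ) (m : ℕ → ι → ℝ)
    (p : ℕ → ι → ℝ)
    (hpK : ∀ t ∈ Finset.Icc 1 (T + 1), p t ∈ K)
    (hppos : ∀ t ∈ Finset.Icc 1 (T + 1), ∀ i, 0 < p t i)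
    (hmin : ∀ t ∈ Finset.Icc 1 (T + 1), ∀ q ∈ K, (∀ i, 0 < q i) →
      (∑ i, p t i * ((∑ τ ∈ Finset.Icc 1 (t - 1), ℓ τ i) + m t i))
          + ∑ i, (1 / η t i) * Real.log (1 / p t i) ≤
        (∑ i, q i * ((∑ τ ∈ Finset.Icc 1 (t - 1), ℓ τ i) + m t i))
          + ∑ i, (1 / η t i) * Real.log (1 / q i))
    (hcond : ∀ t ∈ Finset.Icc 1 T, ∀ i,
      η t i * p t i * (ℓ t i - m t i) ≥ -(1 / 2))
    (u : ι → ℝ) (hu : u ∈ K) :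
    ∑ t ∈ Finset.Icc 1 T, ∑ i, (p t i - u i) * ℓ t i ≤
      (Fintype.card ι : ℝ) * Real.log ((Fintype.card ι : ℝ) * T) / η₁
      + ∑ t ∈ Finset.Icc 1 T, ∑ i,
          (1 / η (t + 1) i - 1 / η t i) * Real.log ((Fintype.card ι : ℝ) * T)
      + ∑ t ∈ Finset.Icc 1 T, ∑ i, η t i * (p t i) ^ 2 * (ℓ t i - m t i) ^ 2
      + (1 / T) * ∑ t ∈ Finset.Icc 1 T, ∑ i,
          (-u i + (1 / (Fintype.card ι : ℝ)) * ∑ j, z j i) * ℓ t i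
      + 2 * H * (⨆ i, |m (T + 1) i|) := by
  classical
  set N : ℝ := (Fintype.card ι : ℝ) with hN
  have hN1 : (1:ℝ) ≤ N := by rw [hN]; exact_mod_cast hn
  have hNpos : (0:ℝ) < N := by linarith
  have hT1 : (1:ℝ) ≤ (T:ℝ) := by exact_mod_cast hT
  have hTpos : (0:ℝ) < (T:ℝ) := by linarith
  have hNT : (0:ℝ) < N * T := by positivity
  have hmemTop : ∀ t ∈ Finset.Icc 1 T, t ∈ Finset.Icc 1 (T+1) := by
    intro t ht; rw [Finset.mem_Icc] at *; omega
  have hmemSucc : ∀ t ∈ Finset.Icc 1 T, t + 1 ∈ Finset.Icc 1 (T+1) := by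
    intro t ht; rw [Finset.mem_Icc] at *; omega
  have hmemLast : T + 1 ∈ Finset.Icc 1 (T+1) := by rw [Finset.mem_Icc]; omega
  have hmemOne : 1 ∈ Finset.Icc 1 (T+1) := by rw [Finset.mem_Icc]; omega
  have hη₁pos : 0 < η₁ := by
    have := hηpos 1 hmemOne (Classical.arbitrary ι)
    rwa [hη1] at this
  -- the mixed comparator
  set w : ι → ℝ := fun i => (1/N) * ∑ j, z j i with hw
  have hwK : w ∈ K := by
    have h1 : ∑ _j : ι, (1/N : ℝ) = 1 := by
      rw [Finset.sum_const, nsmul_eq_mul, Finset.card_univ, ← hN]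
      field_simp
    have h2 := hK.sum_mem (t := Finset.univ) (fun j _ => by positivity) h1
      (fun j _ => hzK j)
    have h3 : w = ∑ j, (1/N : ℝ) • z j := by
      funext i
      simp only [hw, Finset.sum_apply, Pi.smul_apply, smul_eq_mul]
      rw [Finset.mul_sum]
    rw [h3]
    exact h2
  set v : ι → ℝ := fun i => (1 - 1/(T:ℝ)) * u i + (1/(T:ℝ)) * w i with hv
  have h1T : (0:ℝ) < 1/(T:ℝ) := by positivity
  have h1T' : (0:ℝ) ≤ 1 - 1/(T:ℝ) := by
    rw [sub_nonneg, div_le_one hTpos]; exact hT1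
  have hvK : v ∈ K := by
    have h2 := hK hu hwK h1T' (le_of_lt h1T) (by ring)
    have h3 : v = (1 - 1/(T:ℝ)) • u + (1/(T:ℝ)) • w := by
      funext i
      simp [hv]
    rw [h3]
    exact h2
  have hwlb : ∀ i, (1/N) * z i i ≤ w i := by
    intro i
    simp only [hw]
    apply mul_le_mul_of_nonneg_left ?_ (by positivity)
    exact Finset.single_le_sum (f := fun j => z j i)
      (fun j _ => hKnonneg (z j) (hzK j) i) (Finset.mem_univ i)
  have hvpos : ∀ i, 0 < v i := by
    intro i
    have hui := hKnonneg u hu i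
    have h2 : 0 ≤ (1 - 1/(T:ℝ)) * u i := mul_nonneg h1T' hui
    have h3 : 0 < (1/(T:ℝ)) * w i :=
      mul_pos h1T (lt_of_lt_of_le (mul_pos (one_div_pos.mpr hNpos) (hzpos i)) (hwlb i))
    simp only [hv]; linarith
  have hvz : ∀ i, z i i ≤ N * T * v i := by
    intro i
    have h2 : (1/(T:ℝ)) * ((1/N) * z i i) ≤ (1/(T:ℝ)) * w i :=
      mul_le_mul_of_nonneg_left (hwlb i) (le_of_lt h1T)
    have h3 : (1/(T:ℝ)) * w i ≤ v i := by
      have hui := hKnonneg u hu i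
      have := mul_nonneg h1T' hui
      simp only [hv]; linarith
    have h4 : (1/(T:ℝ)) * ((1/N) * z i i) ≤ v i := le_trans h2 h3
    have h5 := mul_le_mul_of_nonneg_left h4 (le_of_lt hNT)
    have h6 : (N*(T:ℝ)) * ((1/(T:ℝ)) * ((1/N) * z i i)) = z i i := by
      field_simp [hNpos.ne', hTpos.ne']
    rw [← h6]
    exact h5
  set lg : ℝ := Real.log (N * (T:ℝ)) with hlg
  have hlog1 : ∀ s ∈ Finset.Icc 1 (T+1), ∀ i,
      Real.log (p s i) - Real.log (v i) ≤ lg := by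
    intro s hs i
    have hp : p s i ≤ z i i := hzmax i (p s) (hpK s hs)
    have h2 : p s i ≤ N * T * v i := le_trans hp (hvz i)
    have h3 := Real.log_le_log (hppos s hs i) h2
    rw [Real.log_mul (ne_of_gt hNT) (ne_of_gt (hvpos i))] at h3
    simp only [hlg]
    linarith
  have hΔ : ∀ t ∈ Finset.Icc 1 T, ∀ i, 0 ≤ 1/η (t+1) i - 1/η t i := by
    intro t ht i
    rw [sub_nonneg]
    exact one_div_le_one_div_of_le (hηpos (t+1) (hmemSucc t ht) i) (hηdec t ht i)
  -- abbreviations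
  set c : ℕ → ι → ℝ := fun t i => (∑ τ ∈ Finset.Icc 1 (t - 1), ℓ τ i) + m t i with hc
  set Φ : ℕ → ℝ := fun t => (∑ i, p t i * c t i)
    + ∑ i, (1/η t i) * (-Real.log (p t i)) with hΦ
  set A : ℕ → ℝ := fun t => ∑ i, p (t+1) i * ℓ t i with hA
  set B : ℕ → ℝ := fun t => ∑ i, p (t+1) i * (m (t+1) i - m t i) with hB
  set C : ℕ → ℝ := fun t => ∑ i, (1/η (t+1) i - 1/η t i) * (-Real.log (p (t+1) i)) with hC
  set D : ℕ → ℝ := fun t => ∑ i, (1/η t i) *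
    (p (t+1) i / p t i - 1 - (Real.log (p (t+1) i) - Real.log (p t i))) with hD
  set L : ι → ℝ := fun i => ∑ τ ∈ Finset.Icc 1 T, ℓ τ i with hL
  set M : ℝ := ⨆ i, |m (T + 1) i| with hM
  -- first-order optimality
  have hfoc : ∀ t ∈ Finset.Icc 1 (T+1), ∀ q ∈ K, (∀ i, 0 < q i) →
      ∑ i, (1/η t i) * ((q i - p t i)/p t i) ≤ ∑ i, c t i * (q i - p t i) := by
    intro t ht q hq hqpos
    exact aux_foc hK (c t) (η t) (hpK t ht) (hppos t ht) (hmin t ht) hq hqpos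
  -- per-step inequality
  have hstep : ∀ t ∈ Finset.Icc 1 T, Φ t + A t + B t + C t + D t ≤ Φ (t+1) := by
    intro t ht
    have ht1 : 1 ≤ t := (Finset.mem_Icc.mp ht).1
    have htT := hmemTop t ht
    have htS := hmemSucc t ht
    have hfoc' := hfoc t htT (p (t+1)) (hpK (t+1) htS) (hppos (t+1) htS)
    have hcid : ∀ i, c (t+1) i = c t i + ℓ t i + (m (t+1) i - m t i) := by
      intro i
      simp only [hc]
      rw [aux_sum_shift (fun τ => ℓ τ i) ht1]
      ring
    have I1 : (∑ i, p (t+1) i * c (t+1) i)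
        = (∑ i, p (t+1) i * c t i) + A t + B t := by
      simp only [hA, hB]
      rw [← Finset.sum_add_distrib, ← Finset.sum_add_distrib]
      exact Finset.sum_congr rfl fun i _ => by rw [hcid i]; ring
    have I2 : (∑ i, (1/η (t+1) i) * (-Real.log (p (t+1) i)))
        = (∑ i, (1/η t i) * (-Real.log (p (t+1) i))) + C t := by
      simp only [hC]
      rw [← Finset.sum_add_distrib]
      exact Finset.sum_congr rfl fun i _ => by ring
    have I3 : D t ≤ (∑ i, c t i * (p (t+1) i - p t i))
        + ∑ i, (1/η t i) * (-Real.log (p (t+1) i) + Real.log (p t i)) := by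
      have e1 : D t = (∑ i, (1/η t i) * ((p (t+1) i - p t i)/p t i))
          + ∑ i, (1/η t i) * (-Real.log (p (t+1) i) + Real.log (p t i)) := by
        simp only [hD]
        rw [← Finset.sum_add_distrib]
        refine Finset.sum_congr rfl fun i _ => ?_
        rw [sub_div, div_self (hppos t htT i).ne']
        ring
      rw [e1]
      linarith [hfoc']
    have I4 : (∑ i, c t i * (p (t+1) i - p t i))
        = (∑ i, p (t+1) i * c t i) - (∑ i, p t i * c t i) := by
      rw [← Finset.sum_sub_distrib]
      exact Finset.sum_congr rfl fun i _ => by ring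
    have I5 : (∑ i, (1/η t i) * (-Real.log (p (t+1) i) + Real.log (p t i)))
        = (∑ i, (1/η t i) * (-Real.log (p (t+1) i)))
          - (∑ i, (1/η t i) * (-Real.log (p t i))) := by
      rw [← Finset.sum_sub_distrib]
      exact Finset.sum_congr rfl fun i _ => by ring
    have eT1 : Φ (t+1) = (∑ i, p (t+1) i * c (t+1) i)
        + ∑ i, (1/η (t+1) i) * (-Real.log (p (t+1) i)) := by simp only [hΦ]
    have eT : Φ t = (∑ i, p t i * c t i) + ∑ i, (1/η t i) * (-Real.log (p t i)) := by
      simp only [hΦ]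
    exact aux_step_comb eT1 eT I1 I2 I3 I4 I5
  have hsumstep : (∑ t ∈ Finset.Icc 1 T, A t) + (∑ t ∈ Finset.Icc 1 T, B t)
      + (∑ t ∈ Finset.Icc 1 T, C t) + (∑ t ∈ Finset.Icc 1 T, D t) ≤ Φ (T+1) - Φ 1 := by
    have tel := aux_telescope Φ T
    have h1 : (∑ t ∈ Finset.Icc 1 T, (A t + B t + C t + D t)) ≤
        ∑ t ∈ Finset.Icc 1 T, (Φ (t+1) - Φ t) := by
      apply Finset.sum_le_sum
      intro t ht
      have := hstep t ht
      linarith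
    rw [tel] at h1
    calc (∑ t ∈ Finset.Icc 1 T, A t) + (∑ t ∈ Finset.Icc 1 T, B t)
        + (∑ t ∈ Finset.Icc 1 T, C t) + (∑ t ∈ Finset.Icc 1 T, D t)
        = ∑ t ∈ Finset.Icc 1 T, (A t + B t + C t + D t) := by
          rw [Finset.sum_add_distrib, Finset.sum_add_distrib, Finset.sum_add_distrib]
      _ ≤ Φ (T+1) - Φ 1 := h1
  -- final optimality against v
  have hfinal : Φ (T+1) ≤ (∑ i, v i * L i) + (∑ i, v i * m (T+1) i)
      + ∑ i, (1/η (T+1) i) * (-Real.log (v i)) := by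
    have h := hmin (T+1) hmemLast v hvK hvpos
    have e3 : ∀ (q : ι → ℝ), (∑ i, (1/η (T+1) i) * Real.log (1/q i))
        = ∑ i, (1/η (T+1) i) * (-Real.log (q i)) := by
      intro q
      exact Finset.sum_congr rfl fun i _ => by rw [one_div (q i), Real.log_inv]
    rw [e3 v, e3 (p (T+1))] at h
    have e2 : (∑ i, v i * ((∑ τ ∈ Finset.Icc 1 (T+1-1), ℓ τ i) + m (T+1) i))
        = (∑ i, v i * L i) + ∑ i, v i * m (T+1) i := by
      rw [← Finset.sum_add_distrib]
      refine Finset.sum_congr rfl fun i _ => ?_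
      simp only [hL, Nat.add_sub_cancel]
      ring
    rw [e2] at h
    have e4 : Φ (T+1) = (∑ i, p (T+1) i * ((∑ τ ∈ Finset.Icc 1 (T+1-1), ℓ τ i)
        + m (T+1) i)) + ∑ i, (1/η (T+1) i) * (-Real.log (p (T+1) i)) := by
      simp only [hΦ, hc]
    linarith [h]
  have hΦ1 : Φ 1 = (∑ i, p 1 i * m 1 i) + ∑ i, (1/η₁) * (-Real.log (p 1 i)) := by
    have e1 : Φ 1 = (∑ i, p 1 i * ((∑ τ ∈ Finset.Icc 1 (1-1), ℓ τ i) + m 1 i))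
        + ∑ i, (1/η 1 i) * (-Real.log (p 1 i)) := by simp only [hΦ, hc]
    rw [e1]
    congr 1
    · refine Finset.sum_congr rfl fun i _ => ?_
      rw [show (1:ℕ) - 1 = 0 from rfl, Finset.Icc_eq_empty (by omega),
        Finset.sum_empty, zero_add]
    · exact Finset.sum_congr rfl fun i _ => by rw [hη1]
  -- m-telescope
  have hmtel : (∑ t ∈ Finset.Icc 1 T, ((∑ i, (p t i - p (t+1) i) * m t i) - B t))
      = (∑ i, p 1 i * m 1 i) - ∑ i, p (T+1) i * m (T+1) i := by
    have key : ∀ t, ((∑ i, (p t i - p (t+1) i) * m t i) - B t)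
        = -((∑ i, p (t+1) i * m (t+1) i) - ∑ i, p t i * m t i) := by
      intro t
      simp only [hB]
      rw [← Finset.sum_sub_distrib, ← Finset.sum_sub_distrib, ← Finset.sum_neg_distrib]
      exact Finset.sum_congr rfl fun i _ => by ring
    have htel : ∑ t ∈ Finset.Icc 1 T,
        ((∑ i, p (t+1) i * m (t+1) i) - ∑ i, p t i * m t i)
        = (∑ i, p (T+1) i * m (T+1) i) - ∑ i, p 1 i * m 1 i :=
      aux_telescope (fun s => ∑ i, p s i * m s i) T
    calc ∑ t ∈ Finset.Icc 1 T, ((∑ i, (p t i - p (t+1) i) * m t i) - B t)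
        = ∑ t ∈ Finset.Icc 1 T,
            -((∑ i, p (t+1) i * m (t+1) i) - ∑ i, p t i * m t i) :=
          Finset.sum_congr rfl fun t _ => key t
      _ = -∑ t ∈ Finset.Icc 1 T,
            ((∑ i, p (t+1) i * m (t+1) i) - ∑ i, p t i * m t i) := by
          rw [Finset.sum_neg_distrib]
      _ = (∑ i, p 1 i * m 1 i) - ∑ i, p (T+1) i * m (T+1) i := by rw [htel]; ring
  -- stability
  have hstab : (∑ t ∈ Finset.Icc 1 T,
      ((∑ i, (p t i - p (t+1) i) * (ℓ t i - m t i)) - D t))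
      ≤ ∑ t ∈ Finset.Icc 1 T, ∑ i, η t i * (p t i) ^ 2 * (ℓ t i - m t i) ^ 2 := by
    apply Finset.sum_le_sum
    intro t ht
    simp only [hD]
    rw [← Finset.sum_sub_distrib]
    apply Finset.sum_le_sum
    intro i _
    exact aux_stab (hppos t (hmemTop t ht) i) (hppos (t+1) (hmemSucc t ht) i)
      (hηpos t (hmemTop t ht) i) (hcond t ht i)
  -- m bound
  have hmbound : (∑ i, v i * m (T+1) i) - (∑ i, p (T+1) i * m (T+1) i) ≤ 2*H*M := by
    have hMub : ∀ i, |m (T+1) i| ≤ M := by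
      intro i
      rw [hM]
      exact le_ciSup (f := fun j => |m (T+1) j|) (Set.Finite.bddAbove (Set.finite_range _)) i
    have hM0 : 0 ≤ M := le_trans (abs_nonneg _) (hMub (Classical.arbitrary ι))
    have hv0 : ∀ i, 0 ≤ v i := fun i => (hvpos i).le
    have hp0 : ∀ i, 0 ≤ p (T+1) i := fun i => (hppos (T+1) hmemLast i).le
    calc (∑ i, v i * m (T+1) i) - (∑ i, p (T+1) i * m (T+1) i)
        = ∑ i, (v i - p (T+1) i) * m (T+1) i := by
          rw [← Finset.sum_sub_distrib]
          exact Finset.sum_congr rfl fun i _ => by ring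
      _ ≤ ∑ i, (v i + p (T+1) i) * M := by
          apply Finset.sum_le_sum
          intro i _
          have habs : |v i - p (T+1) i| ≤ v i + p (T+1) i := by
            rw [abs_le]; constructor <;> [linarith [hv0 i, hp0 i]; linarith [hv0 i, hp0 i]]
          calc (v i - p (T+1) i) * m (T+1) i ≤ |(v i - p (T+1) i) * m (T+1) i| :=
                le_abs_self _
            _ = |v i - p (T+1) i| * |m (T+1) i| := abs_mul _ _
            _ ≤ (v i + p (T+1) i) * M :=
                mul_le_mul habs (hMub i) (abs_nonneg _) (add_nonneg (hv0 i) (hp0 i))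
      _ = ((∑ i, v i) + ∑ i, p (T+1) i) * M := by
          rw [← Finset.sum_mul, Finset.sum_add_distrib]
      _ ≤ 2 * H * M := by
          have := mul_le_mul_of_nonneg_right
            (add_le_add (hKsum v hvK) (hKsum (p (T+1)) (hpK (T+1) hmemLast))) hM0
          linarith
  -- log block
  have hlogblock : (∑ i, (1/η₁) * Real.log (p 1 i))
      + (∑ i, (1/η (T+1) i) * (-Real.log (v i)))
      + (∑ t ∈ Finset.Icc 1 T, ∑ i, (1/η (t+1) i - 1/η t i) * Real.log (p (t+1) i))
      ≤ N * lg / η₁ + ∑ t ∈ Finset.Icc 1 T, ∑ i, (1/η (t+1) i - 1/η t i) * lg := by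
    have hswap : (∑ t ∈ Finset.Icc 1 T, ∑ i,
        (1/η (t+1) i - 1/η t i) * Real.log (p (t+1) i))
        = ∑ i, ∑ t ∈ Finset.Icc 1 T, (1/η (t+1) i - 1/η t i) * Real.log (p (t+1) i) :=
      Finset.sum_comm
    have hswap2 : (∑ t ∈ Finset.Icc 1 T, ∑ i, (1/η (t+1) i - 1/η t i) * lg)
        = ∑ i, ∑ t ∈ Finset.Icc 1 T, (1/η (t+1) i - 1/η t i) * lg :=
      Finset.sum_comm
    rw [hswap, hswap2, ← Finset.sum_add_distrib, ← Finset.sum_add_distrib]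
    have hR : N * lg / η₁ + ∑ i, ∑ t ∈ Finset.Icc 1 T, (1/η (t+1) i - 1/η t i) * lg
        = ∑ i, ((1/η₁) * lg + ∑ t ∈ Finset.Icc 1 T, (1/η (t+1) i - 1/η t i) * lg) := by
      rw [Finset.sum_add_distrib, Finset.sum_const, nsmul_eq_mul, Finset.card_univ, ← hN]
      ring
    rw [hR]
    apply Finset.sum_le_sum
    intro i _
    have hinv : 1/η (T+1) i = 1/η₁ + ∑ t ∈ Finset.Icc 1 T, (1/η (t+1) i - 1/η t i) := by
      have h2 : ∑ t ∈ Finset.Icc 1 T, (1/η (t+1) i - 1/η t i)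
          = 1/η (T+1) i - 1/η 1 i := aux_telescope (fun s => 1/η s i) T
      rw [h2, hη1]; ring
    rw [hinv]
    have hsub : (∑ t ∈ Finset.Icc 1 T, (1/η (t+1) i - 1/η t i) * Real.log (p (t+1) i))
        - (∑ t ∈ Finset.Icc 1 T, (1/η (t+1) i - 1/η t i)) * Real.log (v i)
        = ∑ t ∈ Finset.Icc 1 T,
            (1/η (t+1) i - 1/η t i) * (Real.log (p (t+1) i) - Real.log (v i)) := by
      rw [Finset.sum_mul, ← Finset.sum_sub_distrib]
      exact Finset.sum_congr rfl fun t _ => by ring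
    have hb1 : (1/η₁) * (Real.log (p 1 i) - Real.log (v i)) ≤ (1/η₁) * lg :=
      mul_le_mul_of_nonneg_left (hlog1 1 hmemOne i)
        (le_of_lt (one_div_pos.mpr hη₁pos))
    have hb2 : ∑ t ∈ Finset.Icc 1 T,
        (1/η (t+1) i - 1/η t i) * (Real.log (p (t+1) i) - Real.log (v i))
        ≤ ∑ t ∈ Finset.Icc 1 T, (1/η (t+1) i - 1/η t i) * lg :=
      Finset.sum_le_sum fun t ht =>
        mul_le_mul_of_nonneg_left (hlog1 (t+1) (hmemSucc t ht) i) (hΔ t ht i)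
    have e6 : (1/η₁) * Real.log (p 1 i)
        + (1/η₁ + ∑ t ∈ Finset.Icc 1 T, (1/η (t+1) i - 1/η t i)) * (-Real.log (v i))
        + ∑ t ∈ Finset.Icc 1 T, (1/η (t+1) i - 1/η t i) * Real.log (p (t+1) i)
        = (1/η₁) * (Real.log (p 1 i) - Real.log (v i))
          + ∑ t ∈ Finset.Icc 1 T,
              (1/η (t+1) i - 1/η t i) * (Real.log (p (t+1) i) - Real.log (v i)) := by
      rw [← hsub]; ring
    rw [e6]
    exact add_le_add hb1 hb2
  -- relation between C and the log sums
  have hCsum : (∑ t ∈ Finset.Icc 1 T, C t)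
      = -∑ t ∈ Finset.Icc 1 T, ∑ i, (1/η (t+1) i - 1/η t i) * Real.log (p (t+1) i) := by
    rw [← Finset.sum_neg_distrib]
    apply Finset.sum_congr rfl
    intro t _
    rw [hC, ← Finset.sum_neg_distrib]
    apply Finset.sum_congr rfl
    intro i _
    ring
  -- decomposition of the regret against v
  have hVL : ∑ t ∈ Finset.Icc 1 T, ∑ i, v i * ℓ t i = ∑ i, v i * L i := by
    rw [Finset.sum_comm]
    refine Finset.sum_congr rfl fun i _ => ?_
    simp only [hL]
    rw [Finset.mul_sum]
  have hdecomp : (∑ t ∈ Finset.Icc 1 T, ∑ i, (p t i - v i) * ℓ t i)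
      = (∑ t ∈ Finset.Icc 1 T, ((∑ i, (p t i - p (t+1) i) * (ℓ t i - m t i)) - D t))
        + (∑ t ∈ Finset.Icc 1 T, D t)
        + (∑ t ∈ Finset.Icc 1 T, ((∑ i, (p t i - p (t+1) i) * m t i) - B t))
        + (∑ t ∈ Finset.Icc 1 T, B t)
        + (∑ t ∈ Finset.Icc 1 T, A t)
        - ∑ i, v i * L i := by
    rw [← hVL]
    rw [← Finset.sum_add_distrib, ← Finset.sum_add_distrib, ← Finset.sum_add_distrib,
      ← Finset.sum_add_distrib, ← Finset.sum_sub_distrib]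
    refine Finset.sum_congr rfl fun t _ => ?_
    have e : (∑ i, (p t i - v i) * ℓ t i)
        = (∑ i, ((p t i - p (t+1) i) * (ℓ t i - m t i)
            + (p t i - p (t+1) i) * m t i + p (t+1) i * ℓ t i - v i * ℓ t i)) :=
      Finset.sum_congr rfl fun i _ => by ring
    rw [e]
    simp only [hA]
    rw [Finset.sum_sub_distrib, Finset.sum_add_distrib, Finset.sum_add_distrib]
    ring
  -- split of the target LHS
  have hsplit : (∑ t ∈ Finset.Icc 1 T, ∑ i, (p t i - u i) * ℓ t i)
      = (∑ t ∈ Finset.Icc 1 T, ∑ i, (p t i - v i) * ℓ t i)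
        + (1 / T) * ∑ t ∈ Finset.Icc 1 T, ∑ i,
            (-u i + (1 / N) * ∑ j, z j i) * ℓ t i := by
    rw [Finset.mul_sum, ← Finset.sum_add_distrib]
    refine Finset.sum_congr rfl fun t _ => ?_
    rw [Finset.mul_sum, ← Finset.sum_add_distrib]
    refine Finset.sum_congr rfl fun i _ => ?_
    have hVi : v i = (1 - 1/(T:ℝ)) * u i + (1/(T:ℝ)) * ((1/N) * ∑ j, z j i) := rfl
    rw [hVi]
    ring
  -- assemble
  rw [hsplit]
  have hneg : (∑ i, (1/η₁) * Real.log (p 1 i))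
      = -∑ i, (1/η₁) * (-Real.log (p 1 i)) := by
    rw [← Finset.sum_neg_distrib]
    exact Finset.sum_congr rfl fun i _ => by ring
  have hmain : (∑ t ∈ Finset.Icc 1 T, ∑ i, (p t i - v i) * ℓ t i) ≤
      N * lg / η₁
      + (∑ t ∈ Finset.Icc 1 T, ∑ i, (1 / η (t + 1) i - 1 / η t i) * lg)
      + (∑ t ∈ Finset.Icc 1 T, ∑ i, η t i * (p t i) ^ 2 * (ℓ t i - m t i) ^ 2)
      + 2 * H * M := by
    rw [hdecomp]
    exact aux_comb hstab hmtel hsumstep hfinal hΦ1 hmbound hCsum hneg hlogblock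
  exact aux_comb2 hmain
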